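/- Let 0<C<D<1, x>1, and let p ≤ m ≤ n ≤ q be integers. Let (α_i), (β_i), (γ_i), for p ≤ i < q, be complex numbers with C ≤ |α_i| ≤ D, C ≤ |β_i| ≤ D and |γ_i| ≤ D. For p ≤ s ≤ t ≤ q write α_{t,s} = α_{t−1}·…·α_s and β_{t,s} = β_{t−1}·…·β_s, and set γ_{n,m} = Σ_{i=m}^{n−1} β_{n,i+1} γ_i α_{i,m}. Assume that |α_{i,p}| ≤ |β_{i,p}|^x for all p ≤ i ≤ q. Then |γ_{n,m}| ≤ K₁ · |β_{n,p}| / |α_{m,p}|^{1/x}, where K₁ = D/(C(1 − D^{1−1/x})). -/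

import Mathlib

open Finset

set_option maxHeartbeats 1000000

noncomputable section

/-- The constant `K₁ = D / (C(1 - D^{1-1/x}))`. -/
def K1 (C D x : ℝ) : ℝ := D / (C * (1 - D ^ (1 - 1 / x)))

/-- Estimate for the off-diagonal entries: if `C ≤ |αᵢ|, |βᵢ| ≤ D`, `|γᵢ| ≤ D`, and
`|α_{i,p}| ≤ |β_{i,p}|^x` for all `p ≤ i ≤ q`, then
`|γ_{n,m}| ≤ K₁ |β_{n,p}| / |α_{m,p}|^{1/x}` for `p ≤ m ≤ n ≤ q`. -/
theorem offdiagonal_estimate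
    (C D x : ℝ) (p m n q : ℕ) (α β γ : ℕ → ℂ)
    (hC : 0 < C) (hCD : C < D) (hD : D < 1) (hx : 1 < x)
    (hpm : p ≤ m) (hmn : m ≤ n) (hnq : n ≤ q)
    (hα : ∀ i, p ≤ i → i < q → C ≤ ‖α i‖ ∧ ‖α i‖ ≤ D)
    (hβ : ∀ i, p ≤ i → i < q → C ≤ ‖β i‖ ∧ ‖β i‖ ≤ D)
    (hγ : ∀ i, p ≤ i → i < q → ‖γ i‖ ≤ D)
    (hdom : ∀ i, p ≤ i → i ≤ q →
      ‖∏ t ∈ Finset.Ico p i, α t‖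
        ≤ ‖∏ t ∈ Finset.Ico p i, β t‖ ^ x) :
    ‖∑ i ∈ Finset.Ico m n,
        (∏ t ∈ Finset.Ico (i + 1) n, β t) * γ i * ∏ t ∈ Finset.Ico m i, α t‖
      ≤ K1 C D x * ‖∏ t ∈ Finset.Ico p n, β t‖
          / ‖∏ t ∈ Finset.Ico p m, α t‖ ^ (1 / x) := by
  have hD0 : (0:ℝ) < D := hC.trans hCD
  have hx0 : (0:ℝ) < x := lt_trans one_pos hx
  have he0 : (0:ℝ) < 1 - 1/x := by
    have h1 : 1/x < 1 := by rw [div_lt_one hx0]; exact hx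
    linarith
  set r : ℝ := D ^ (1 - 1/x) with hrdef
  have hr0 : (0:ℝ) < r := Real.rpow_pos_of_pos hD0 _
  have hr1 : r < 1 := Real.rpow_lt_one hD0.le hD he0
  have ha_pos : ∀ i, i ≤ q → 0 < ‖∏ t ∈ Finset.Ico p i, α t‖ := by
    intro i hi
    rw [norm_prod]
    refine Finset.prod_pos fun t ht => ?_
    obtain ⟨htp, hti⟩ := Finset.mem_Ico.mp ht
    exact lt_of_lt_of_le hC (hα t htp (lt_of_lt_of_le hti hi)).1
  have hb_pos : ∀ i, i ≤ q → 0 < ‖∏ t ∈ Finset.Ico p i, β t‖ := by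
    intro i hi
    rw [norm_prod]
    refine Finset.prod_pos fun t ht => ?_
    obtain ⟨htp, hti⟩ := Finset.mem_Ico.mp ht
    exact lt_of_lt_of_le hC (hβ t htp (lt_of_lt_of_le hti hi)).1
  have hAm : 0 < ‖∏ t ∈ Finset.Ico p m, α t‖ := ha_pos m (hmn.trans hnq)
  have hBn : 0 < ‖∏ t ∈ Finset.Ico p n, β t‖ := hb_pos n hnq
  have hAmx : (0:ℝ) < ‖∏ t ∈ Finset.Ico p m, α t‖ ^ (1/x) :=
    Real.rpow_pos_of_pos hAm _
  have key : ∀ i ∈ Finset.Ico m n,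
      ‖(∏ t ∈ Finset.Ico (i+1) n, β t) * γ i * ∏ t ∈ Finset.Ico m i, α t‖
        ≤ (D / C * (‖∏ t ∈ Finset.Ico p n, β t‖
            / ‖∏ t ∈ Finset.Ico p m, α t‖ ^ (1/x))) * r ^ (i - m) := by
    intro i hi
    obtain ⟨hmi, hin⟩ := Finset.mem_Ico.mp hi
    have hiq : i < q := lt_of_lt_of_le hin hnq
    have hpi : p ≤ i := hpm.trans hmi
    have hAi : 0 < ‖∏ t ∈ Finset.Ico p i, α t‖ := ha_pos i hiq.le
    have hBi : 0 < ‖∏ t ∈ Finset.Ico p i, β t‖ := hb_pos i hiq.le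
    have hBi1 : 0 < ‖∏ t ∈ Finset.Ico p (i+1), β t‖ := hb_pos (i+1) hiq
    have hsplitα : ‖∏ t ∈ Finset.Ico p i, α t‖
        = ‖∏ t ∈ Finset.Ico p m, α t‖ * ‖∏ t ∈ Finset.Ico m i, α t‖ := by
      rw [← norm_mul, Finset.prod_Ico_consecutive α hpm hmi]
    have hsplitβ : ‖∏ t ∈ Finset.Ico p n, β t‖
        = ‖∏ t ∈ Finset.Ico p (i+1), β t‖
          * ‖∏ t ∈ Finset.Ico (i+1) n, β t‖ := by
      rw [← norm_mul, Finset.prod_Ico_consecutive β (hpi.trans (Nat.le_succ i)) hin]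
    have hBi1_eq : ‖∏ t ∈ Finset.Ico p (i+1), β t‖
        = ‖∏ t ∈ Finset.Ico p i, β t‖ * ‖β i‖ := by
      rw [← norm_mul, Finset.prod_Ico_succ_top hpi]
    have hMi : ‖∏ t ∈ Finset.Ico m i, α t‖
        = ‖∏ t ∈ Finset.Ico p i, α t‖ / ‖∏ t ∈ Finset.Ico p m, α t‖ := by
      rw [eq_div_iff hAm.ne', mul_comm]; exact hsplitα.symm
    have hNi : ‖∏ t ∈ Finset.Ico (i+1) n, β t‖
        = ‖∏ t ∈ Finset.Ico p n, β t‖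
          / ‖∏ t ∈ Finset.Ico p (i+1), β t‖ := by
      rw [eq_div_iff hBi1.ne', mul_comm]; exact hsplitβ.symm
    set Am := ‖∏ t ∈ Finset.Ico p m, α t‖
    set Ai := ‖∏ t ∈ Finset.Ico p i, α t‖
    set Bn := ‖∏ t ∈ Finset.Ico p n, β t‖
    set Bi := ‖∏ t ∈ Finset.Ico p i, β t‖
    set Bi1 := ‖∏ t ∈ Finset.Ico p (i+1), β t‖
    have hu0 : 0 < Ai / Am := div_pos hAi hAm
    have hu_eq : Ai/Am = (Ai/Am)^(1/x) * (Ai/Am)^(1-1/x) := by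
      have h1 : 1/x + (1-1/x) = 1 := by ring
      rw [← Real.rpow_add hu0, h1, Real.rpow_one]
    have h1 : (Ai/Am)^(1/x) ≤ Bi / Am^(1/x) := by
      rw [Real.div_rpow hAi.le hAm.le]
      have h2 : Ai ^ (1/x) ≤ (Bi ^ x) ^ (1/x) :=
        Real.rpow_le_rpow hAi.le (hdom i hpi hiq.le) (by positivity)
      have h3 : (Bi ^ x) ^ (1/x) = Bi := by
        rw [← Real.rpow_mul hBi.le, mul_one_div_cancel hx0.ne', Real.rpow_one]
      rw [← h3]
      gcongr
    have h3 : (Ai/Am)^(1-1/x) ≤ r ^ (i - m) := by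
      have hd : Ai/Am ≤ D ^ (i - m) := by
        rw [← hMi, norm_prod]
        calc ∏ t ∈ Finset.Ico m i, ‖α t‖
            ≤ ∏ t ∈ Finset.Ico m i, D := by
              refine Finset.prod_le_prod (fun t ht => (norm_nonneg _)) fun t ht => ?_
              obtain ⟨htm, hti⟩ := Finset.mem_Ico.mp ht
              exact (hα t (hpm.trans htm) (lt_of_lt_of_le hti hiq.le)).2
          _ = D ^ (i - m) := by rw [Finset.prod_const, Nat.card_Ico]
      calc (Ai/Am)^(1-1/x) ≤ ((D ^ (i-m) : ℝ))^(1-1/x) :=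
            Real.rpow_le_rpow hu0.le hd he0.le
        _ = r ^ (i - m) := by
            rw [← Real.rpow_natCast D (i-m), ← Real.rpow_mul hD0.le, mul_comm,
              Real.rpow_mul hD0.le, Real.rpow_natCast]
    have hu_le : Ai/Am ≤ (Bi/Am^(1/x)) * r^(i-m) := by
      calc Ai/Am = (Ai/Am)^(1/x) * (Ai/Am)^(1-1/x) := hu_eq
        _ ≤ (Bi/Am^(1/x)) * r^(i-m) :=
            mul_le_mul h1 h3 (Real.rpow_nonneg hu0.le _) (by positivity)
    calc ‖(∏ t ∈ Finset.Ico (i+1) n, β t) * γ i * ∏ t ∈ Finset.Ico m i, α t‖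
        = (Bn/Bi1) * ‖γ i‖ * (Ai/Am) := by
          rw [norm_mul, norm_mul, hNi, hMi]
      _ ≤ (Bn/Bi1) * D * ((Bi/Am^(1/x)) * r^(i-m)) := by
          have hγle := hγ i hpi hiq
          have hγ0 := norm_nonneg (γ i)
          apply mul_le_mul _ hu_le hu0.le (by positivity)
          exact mul_le_mul le_rfl hγle hγ0 (by positivity)
      _ = (Bn * Bi / Bi1) * (D / Am^(1/x)) * r^(i-m) := by ring
      _ ≤ (Bn / C) * (D / Am^(1/x)) * r^(i-m) := by
          have hfrac : Bn * Bi / Bi1 ≤ Bn / C := by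
            rw [div_le_div_iff₀ hBi1 hC, hBi1_eq]
            have hβC := (hβ i hpi hiq).1
            nlinarith [mul_le_mul_of_nonneg_left hβC (mul_nonneg hBn.le hBi.le)]
          gcongr
      _ = (D / C * (Bn / Am^(1/x))) * r^(i-m) := by ring
  have hgeom : ∑ i ∈ Finset.Ico m n, r ^ (i - m) ≤ 1/(1-r) := by
    rw [Finset.sum_Ico_eq_sum_range]
    simp only [Nat.add_sub_cancel_left]
    calc ∑ i ∈ Finset.range (n - m), r ^ i = (1 - r ^ (n-m))/(1-r) := by
          rw [geom_sum_eq hr1.ne, div_eq_div_iff (sub_ne_zero.mpr hr1.ne)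
            (sub_ne_zero.mpr hr1.ne')]
          ring
      _ ≤ 1/(1-r) := by
          gcongr
          · nlinarith [pow_nonneg hr0.le (n-m)]
  calc ‖∑ i ∈ Finset.Ico m n,
        (∏ t ∈ Finset.Ico (i + 1) n, β t) * γ i * ∏ t ∈ Finset.Ico m i, α t‖
      ≤ ∑ i ∈ Finset.Ico m n,
        ‖(∏ t ∈ Finset.Ico (i + 1) n, β t) * γ i * ∏ t ∈ Finset.Ico m i, α t‖ :=
        norm_sum_le _ _
    _ ≤ ∑ i ∈ Finset.Ico m n, (D / C * (‖∏ t ∈ Finset.Ico p n, β t‖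
            / ‖∏ t ∈ Finset.Ico p m, α t‖ ^ (1/x))) * r ^ (i - m) :=
        Finset.sum_le_sum key
    _ = (D / C * (‖∏ t ∈ Finset.Ico p n, β t‖
            / ‖∏ t ∈ Finset.Ico p m, α t‖ ^ (1/x)))
          * ∑ i ∈ Finset.Ico m n, r ^ (i - m) := by rw [← Finset.mul_sum]
    _ ≤ (D / C * (‖∏ t ∈ Finset.Ico p n, β t‖
            / ‖∏ t ∈ Finset.Ico p m, α t‖ ^ (1/x))) * (1/(1-r)) :=
        mul_le_mul_of_nonneg_left hgeom (by positivity)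
    _ = K1 C D x * ‖∏ t ∈ Finset.Ico p n, β t‖
          / ‖∏ t ∈ Finset.Ico p m, α t‖ ^ (1 / x) := by
        rw [K1, ← hrdef]
        have h1r : (1:ℝ) - r ≠ 0 := sub_ne_zero.mpr hr1.ne'
        field_simp
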